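/- For relation names a and b, the DA expression aaa − ((aa − b)a ∪ ba) is unsatisfiable in every structure (finite or infinite): for every structure I over {a, b}, (aaa − ((aa − b)a ∪ ba))(I) = ∅. -/
import Mathlib


/-- Syntax of the Downward Algebra (DA): expressions built from relation names
in a vocabulary `Γ` using union, intersection, difference, and composition. -/
inductive DA (Γ : Type) : Type where
  | var : Γ → DA Γ
  | union : DA Γ → DA Γ → DA Γ
  | inter : DA Γ → DA Γ → DA Γ
  | diff : DA Γ → DA Γ → DA Γ
  | comp : DA Γ → DA Γ → DA Γ

namespace DA

/-- Semantics: the binary relation `e(I)` defined by expression `e` in a structure `I`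
(a structure over `Γ` with domain `D` assigns a binary relation on `D` to each name). -/
def eval {Γ D : Type} (I : Γ → D → D → Prop) : DA Γ → D → D → Prop
  | .var a => I a
  | .union e f => fun x y => eval I e x y ∨ eval I f x y
  | .inter e f => fun x y => eval I e x y ∧ eval I f x y
  | .diff e f => fun x y => eval I e x y ∧ ¬ eval I f x y
  | .comp e f => fun x y => ∃ z, eval I e x z ∧ eval I f z y

/-- The difference degree of an expression. -/
def deg {Γ : Type} : DA Γ → ℕ
  | .var _ => 0
  | .union e f => max (deg e) (deg f)
  | .inter e f => max (deg e) (deg f)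
  | .diff e f => max (deg e) (deg f) + 1
  | .comp e f => max (deg e) (deg f)

/-- A structure is finite when each relation is a finite binary relation. -/
def FiniteStruct {Γ D : Type} (I : Γ → D → D → Prop) : Prop :=
  ∀ a, {p : D × D | I a p.1 p.2}.Finite

/-- An expression is finitely satisfiable if some finite structure makes it
evaluate to a nonempty relation. -/
def FinSat {Γ : Type} (e : DA Γ) : Prop :=
  ∃ (D : Type) (I : Γ → D → D → Prop), FiniteStruct I ∧ ∃ x y, eval I e x y

end DA

/-- The vocabulary with two relation names a and b. -/
inductive AB : Type where
  | a : AB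
  | b : AB

open DA in
/-- The expression aaa − ((aa − b)a ∪ ba) over {a, b}. -/
def e12 : DA AB :=
  .diff (.comp (.var .a) (.comp (.var .a) (.var .a)))
    (.union (.comp (.diff (.comp (.var .a) (.var .a)) (.var .b)) (.var .a))
            (.comp (.var .b) (.var .a)))

/-- The expression aaa − ((aa − b)a ∪ ba) is unsatisfiable in every structure,
finite or infinite. -/
theorem stmt12 (D : Type) (I : AB → D → D → Prop) (x y : D) :
    ¬ DA.eval I e12 x y := by
  rintro ⟨⟨z, haz, w, haw, hay⟩, hneg⟩
  apply hneg
  by_cases hb : I .b x w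
  · exact Or.inr ⟨w, hb, hay⟩
  · exact Or.inl ⟨w, ⟨⟨z, haz, haw⟩, hb⟩, hay⟩
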